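/- For p in (1,∞), the integral ∫_ℝ exp(t₁ y + t₂ |y|^p) γ_p(dy) is finite if and only if t₂ < 1/p; in particular the effective domain of Λ_p is ℝ × (-∞, 1/p). -/

import Mathlib

open Real MeasureTheory

/-- The generalized `p`-th Gaussian density. -/
noncomputable def fp (p : ℝ) (y : ℝ) : ℝ :=
  Real.exp (-|y| ^ p / p) / (2 * p ^ (1/p) * Real.Gamma (1 + 1/p))

lemma integrable_exp_neg_abs' : Integrable (fun y : ℝ => Real.exp (-|y|)) := by
  have h1 : IntegrableOn (fun y : ℝ => Real.exp (-|y|)) (Set.Iic 0) := by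
    refine (integrableOn_exp_Iic 0).congr_fun (fun y hy => ?_) measurableSet_Iic
    simp [abs_of_nonpos (Set.mem_Iic.mp hy)]
  have h2 : IntegrableOn (fun y : ℝ => Real.exp (-|y|)) (Set.Ioi 0) := by
    refine (exp_neg_integrableOn_Ioi 0 one_pos).congr_fun (fun y hy => ?_) measurableSet_Ioi
    simp [abs_of_pos (Set.mem_Ioi.mp hy)]
  have := h1.union h2
  rwa [Set.Iic_union_Ioi, integrableOn_univ] at this

lemma rpow_bound (p : ℝ) (hp : 1 < p) {ε : ℝ} (hε : 0 < ε) :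
    ∃ M : ℝ, ∀ r : ℝ, 0 ≤ r → r ≤ M + ε * r ^ p := by
  have hp1 : (0:ℝ) < p - 1 := by linarith
  refine ⟨(1/ε) ^ (1/(p-1)), fun r hr => ?_⟩
  set M := (1/ε) ^ ((1:ℝ)/(p-1)) with hMdef
  have hM : 0 < M := Real.rpow_pos_of_pos (by positivity) _
  rcases le_or_gt r M with h | h
  · have : 0 ≤ ε * r ^ p := by positivity
    linarith
  · have hr0 : 0 < r := hM.trans h
    have hMe : M ^ (p-1) = 1/ε := by
      rw [hMdef, ← Real.rpow_mul (by positivity), one_div_mul_cancel hp1.ne', Real.rpow_one]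
    have h1 : 1/ε ≤ r ^ (p-1) := by
      rw [← hMe]; exact Real.rpow_le_rpow hM.le h.le hp1.le
    have hsplit : r ^ p = r ^ (p-1) * r := by
      have h2 := Real.rpow_add hr0 (p-1) 1
      rw [sub_add_cancel, Real.rpow_one] at h2
      exact h2
    have : r ≤ ε * r ^ p := by
      rw [hsplit]
      calc r = ε * (1/ε) * r := by field_simp
        _ ≤ ε * r ^ (p-1) * r := by
            apply mul_le_mul_of_nonneg_right _ hr0.le
            exact mul_le_mul_of_nonneg_left h1 hε.le
        _ = ε * (r ^ (p-1) * r) := by ring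
    linarith
  
theorem stmt3 (p t₁ t₂ : ℝ) (hp : 1 < p) :
    Integrable (fun y : ℝ => Real.exp (t₁ * y + t₂ * |y| ^ p) * fp p y) ↔ t₂ < 1/p := by
  have hp0 : (0:ℝ) < p := lt_trans one_pos hp
  set C : ℝ := 2 * p ^ ((1:ℝ)/p) * Real.Gamma (1 + 1/p) with hC
  have hCpos : 0 < C := by
    have := Real.Gamma_pos_of_pos (show (0:ℝ) < 1 + 1/p by positivity)
    have : (0:ℝ) < p ^ ((1:ℝ)/p) := Real.rpow_pos_of_pos hp0 _
    positivity
  set c : ℝ := t₂ - 1/p with hc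
  have hfun : (fun y : ℝ => Real.exp (t₁ * y + t₂ * |y| ^ p) * fp p y)
      = fun y : ℝ => Real.exp (t₁ * y + c * |y| ^ p) * C⁻¹ := by
    funext y
    rw [fp, ← hC, div_eq_mul_inv, ← mul_assoc, ← Real.exp_add]
    congr 1
    rw [hc]; congr 1
    ring
  rw [hfun, integrable_mul_const_iff (isUnit_iff_ne_zero.mpr (inv_ne_zero hCpos.ne'))]
  have hcont : Continuous fun y : ℝ => Real.exp (t₁ * y + c * |y| ^ p) :=
    Real.continuous_exp.comp (((continuous_const.mul continuous_id).add
      (continuous_const.mul (continuous_abs.rpow_const fun _ => Or.inr hp0.le))))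
  constructor
  · intro hint
    by_contra hle
    push_neg at hle
    have hc0 : 0 ≤ c := by rw [hc]; linarith
    rcases le_or_gt 0 t₁ with ht | ht
    · have hIO : IntegrableOn (fun y : ℝ => Real.exp (t₁ * y + c * |y| ^ p)) (Set.Ici 0) :=
        hint.integrableOn
      have h1 : IntegrableOn (fun _ : ℝ => (1:ℝ)) (Set.Ici 0) := by
        refine hIO.mono' aestronglyMeasurable_const ?_
        refine (ae_restrict_iff' measurableSet_Ici).mpr (Filter.Eventually.of_forall fun y hy => ?_)
        have h2 : (0:ℝ) ≤ t₁ * y + c * |y| ^ p := by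
          have : (0:ℝ) ≤ |y| ^ p := Real.rpow_nonneg (abs_nonneg y) p
          have := mul_nonneg ht (Set.mem_Ici.mp hy)
          nlinarith [mul_nonneg hc0 (Real.rpow_nonneg (abs_nonneg y) p)]
        simpa using Real.one_le_exp h2
      rcases ((integrableOn_const_iff (C := (1:ℝ))).mp h1) with h | h
      · norm_num at h
      · simp [Real.volume_Ici] at h
    · have hIO : IntegrableOn (fun y : ℝ => Real.exp (t₁ * y + c * |y| ^ p)) (Set.Iic 0) :=
        hint.integrableOn
      have h1 : IntegrableOn (fun _ : ℝ => (1:ℝ)) (Set.Iic 0) := by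
        refine hIO.mono' aestronglyMeasurable_const ?_
        refine (ae_restrict_iff' measurableSet_Iic).mpr (Filter.Eventually.of_forall fun y hy => ?_)
        have h2 : (0:ℝ) ≤ t₁ * y + c * |y| ^ p := by
          nlinarith [mul_nonneg hc0 (Real.rpow_nonneg (abs_nonneg y) p),
            mul_nonneg (neg_nonneg.mpr ht.le) (neg_nonneg.mpr (Set.mem_Iic.mp hy))]
        simpa using Real.one_le_exp h2
      rcases ((integrableOn_const_iff (C := (1:ℝ))).mp h1) with h | h
      · norm_num at h
      · simp [Real.volume_Iic] at h
  · intro ht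
    have hcneg : c < 0 := by rw [hc]; linarith
    have ha : (0:ℝ) < |t₁| + 1 := by positivity
    have hε : 0 < -c / (|t₁| + 1) := div_pos (neg_pos.mpr hcneg) ha
    obtain ⟨M, hM⟩ := rpow_bound p hp hε
    refine Integrable.mono' (integrable_exp_neg_abs'.const_mul (Real.exp ((|t₁| + 1) * M)))
      hcont.aestronglyMeasurable (Filter.Eventually.of_forall fun y => ?_)
    rw [Real.norm_eq_abs, Real.abs_exp, ← Real.exp_add]
    apply Real.exp_le_exp.mpr
    have hb := hM |y| (abs_nonneg y)
    have h1 : t₁ * y ≤ |t₁| * |y| := by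
      calc t₁ * y ≤ |t₁ * y| := le_abs_self _
        _ = |t₁| * |y| := abs_mul _ _
    have h2 : (|t₁| + 1) * |y| ≤ (|t₁| + 1) * M + (-c) * |y| ^ p := by
      have := mul_le_mul_of_nonneg_left hb ha.le
      calc (|t₁| + 1) * |y| ≤ (|t₁| + 1) * (M + (-c / (|t₁| + 1)) * |y| ^ p) := this
        _ = (|t₁| + 1) * M + (-c) * |y| ^ p := by field_simp
    nlinarith
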